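/- Define the fourth-order Fourier coefficients C_{j_4 j_3 j_2 j_1} = ∫_t^T φ_{j_4}(s_4) ∫_t^{s_4} φ_{j_3}(s_3) ∫_t^{s_3} φ_{j_2}(s_2) ∫_t^{s_2} φ_{j_1}(s_1) ds_1 ds_2 ds_3 ds_4 with respect to the orthonormal Legendre system. Then lim_{p → ∞} Σ_{j_4=0}^{p} Σ_{j_1=0}^{p} C_{j_4 j_1 j_4 j_1} = 0. -/

import Mathlib

open MeasureTheory Filter Finset

/-- Legendre polynomials via the three-term recurrence
`(n+2) P_{n+2}(x) = (2n+3) x P_{n+1}(x) - (n+1) P_n(x)`, with `P_0 = 1`, `P_1 = x`. -/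
noncomputable def legendreP : ℕ → ℝ → ℝ
  | 0 => fun _ => 1
  | 1 => fun x => x
  | n + 2 => fun x =>
      ((2 * (n : ℝ) + 3) * x * legendreP (n + 1) x - ((n : ℝ) + 1) * legendreP n x) / ((n : ℝ) + 2)

noncomputable def legendreP' : ℕ → ℝ → ℝ
  | 0 => fun _ => 0
  | 1 => fun _ => 1
  | n + 2 => fun x =>
      ((2 * (n : ℝ) + 3) * (legendreP (n + 1) x + x * legendreP' (n + 1) x)
        - ((n : ℝ) + 1) * legendreP' n x) / ((n : ℝ) + 2)

lemma legendreP_add_two (n : ℕ) (x : ℝ) : legendreP (n + 2) x =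
    ((2 * (n : ℝ) + 3) * x * legendreP (n + 1) x - ((n : ℝ) + 1) * legendreP n x) / ((n : ℝ) + 2) :=
  rfl

lemma two_step {P : ℕ → Prop} (h0 : P 0) (h1 : P 1)
    (hstep : ∀ n, P n → P (n + 1) → P (n + 2)) : ∀ n, P n := by
  have key : ∀ n, P n ∧ P (n + 1) := by
    intro n
    induction n with
    | zero => exact ⟨h0, h1⟩
    | succ m ih => exact ⟨ih.2, hstep m ih.1 ih.2⟩
  exact fun n => (key n).1

lemma legendreP_continuous (n : ℕ) : Continuous (legendreP n) := by
  induction n using two_step with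
  | h0 => exact continuous_const
  | h1 => exact continuous_id
  | hstep n h1 h2 =>
    simp only [legendreP]
    exact (((continuous_const.mul continuous_id).mul h2).sub (continuous_const.mul h1)).div_const _

lemma legendreP_one_val (n : ℕ) : legendreP n 1 = 1 := by
  induction n using two_step with
  | h0 => rfl
  | h1 => rfl
  | hstep n h1 h2 =>
    rw [legendreP_add_two, h1, h2]
    have : (n : ℝ) + 2 ≠ 0 := by positivity
    field_simp
    ring

lemma legendreP_neg_one_val (n : ℕ) : legendreP n (-1) = (-1) ^ n := by
  induction n using two_step with
  | h0 => rfl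
  | h1 => simp [legendreP]
  | hstep n h1 h2 =>
    rw [legendreP_add_two, h1, h2]
    have : (n : ℝ) + 2 ≠ 0 := by positivity
    field_simp
    ring

lemma legendreP_parity (n : ℕ) (x : ℝ) : legendreP n (-x) = (-1) ^ n * legendreP n x := by
  induction n using two_step generalizing x with
  | h0 => simp [legendreP]
  | h1 => simp [legendreP]
  | hstep n h1 h2 =>
    rw [legendreP_add_two, legendreP_add_two, h1, h2]
    have : (n : ℝ) + 2 ≠ 0 := by positivity
    field_simp
    ring

lemma legendreP_hasDerivAt (n : ℕ) (x : ℝ) : HasDerivAt (legendreP n) (legendreP' n x) x := by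
  induction n using two_step generalizing x with
  | h0 => simpa [legendreP, legendreP'] using (hasDerivAt_const x (1:ℝ))
  | h1 => simpa [legendreP, legendreP'] using (hasDerivAt_id' x)
  | hstep n h1 h2 =>
    have hxf : HasDerivAt (fun y : ℝ => (2 * (n : ℝ) + 3) * y * legendreP (n + 1) y)
        ((2 * (n : ℝ) + 3) * legendreP (n + 1) x
          + (2 * (n : ℝ) + 3) * x * legendreP' (n + 1) x) x := by
      have := ((hasDerivAt_id x).const_mul (2 * (n : ℝ) + 3)).mul (h2 x)
      refine this.congr_deriv ?_
      simp only [id_eq]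
      ring
    have hg : HasDerivAt (fun y : ℝ => ((n : ℝ) + 1) * legendreP n y)
        (((n : ℝ) + 1) * legendreP' n x) x := (h1 x).const_mul _
    have := (hxf.sub hg).div_const ((n : ℝ) + 2)
    refine this.congr_deriv ?_
    show _ = legendreP' (n + 2) x
    simp only [legendreP']
    push_cast
    ring

/-- joint recurrence identities for the derivative -/
lemma legendreP'_ids (n : ℕ) (x : ℝ) :
    legendreP' (n + 1) x = x * legendreP' n x + ((n : ℝ) + 1) * legendreP n x ∧
    x * legendreP' (n + 1) x - legendreP' n x = ((n : ℝ) + 1) * legendreP (n + 1) x := by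
  induction n generalizing x with
  | zero => constructor <;> simp [legendreP, legendreP']
  | succ m ih =>
    have h1 := fun y => (ih y).1
    have h2 := fun y => (ih y).2
    have hm2 : (m : ℝ) + 2 ≠ 0 := by positivity
    have hP' : legendreP' (m + 2) x =
        ((2 * (m : ℝ) + 3) * (legendreP (m + 1) x + x * legendreP' (m + 1) x)
          - ((m : ℝ) + 1) * legendreP' m x) / ((m : ℝ) + 2) := rfl
    constructor
    · -- (1)_{m+1} from (2)'_m
      rw [hP']
      have := h2 x
      field_simp
      push_cast
      nlinarith [h2 x]
    · -- (2)'_{m+1} from (1)_m, (2)'_m, recurrences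
      rw [hP', legendreP_add_two]
      have e1 := h1 x
      have e2 := h2 x
      have e3 : x * (x * legendreP' (m + 1) x) = x * legendreP' m x
          + ((m : ℝ) + 1) * (x * legendreP (m + 1) x) := by
        rw [show x * legendreP' (m+1) x = legendreP' m x + ((m : ℝ) + 1) * legendreP (m + 1) x by
          linarith [h2 x]]
        ring
      field_simp
      push_cast
      nlinarith [e1, e2, e3]

lemma legendreP'_step (m : ℕ) (x : ℝ) :
    legendreP' (m + 2) x = legendreP' m x + (2 * (m : ℝ) + 3) * legendreP (m + 1) x := by
  have h1 := (legendreP'_ids (m + 1) x).1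
  have h2 := (legendreP'_ids m x).2
  push_cast at h1 h2 ⊢
  linarith


/-- The orthonormal Legendre system on `[t, T]`. -/
noncomputable def legendreSys (t T : ℝ) (j : ℕ) (x : ℝ) : ℝ :=
  Real.sqrt ((2 * (j : ℝ) + 1) / (T - t)) * legendreP j ((2 * x - T - t) / (T - t))

/-- The trigonometric orthonormal system on `[t, T]`. -/
noncomputable def trigSys (t T : ℝ) (j : ℕ) (x : ℝ) : ℝ :=
  if j = 0 then 1 / Real.sqrt (T - t)
  else if j % 2 = 1 then
    Real.sqrt (2 / (T - t)) * Real.sin (2 * Real.pi * (((j + 1) / 2 : ℕ) : ℝ) * (x - t) / (T - t))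
  else
    Real.sqrt (2 / (T - t)) * Real.cos (2 * Real.pi * ((j / 2 : ℕ) : ℝ) * (x - t) / (T - t))

/-- Double Fourier coefficient `C_{j₂ j₁}`. -/
noncomputable def C2 (t T : ℝ) (φ : ℕ → ℝ → ℝ) (ψ1 ψ2 : ℝ → ℝ) (j2 j1 : ℕ) : ℝ :=
  ∫ s2 in t..T, ψ2 s2 * φ j2 s2 * ∫ s1 in t..s2, ψ1 s1 * φ j1 s1

/-- Triple Fourier coefficient `C_{j₃ j₂ j₁}`. -/
noncomputable def C3 (t T : ℝ) (φ : ℕ → ℝ → ℝ) (ψ1 ψ2 ψ3 : ℝ → ℝ) (j3 j2 j1 : ℕ) : ℝ :=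
  ∫ s3 in t..T, ψ3 s3 * φ j3 s3 *
    ∫ s2 in t..s3, ψ2 s2 * φ j2 s2 * ∫ s1 in t..s2, ψ1 s1 * φ j1 s1

/-- Fourth-order Fourier coefficient `C_{j₄ j₃ j₂ j₁}` (with `ψ_l ≡ 1`). -/
noncomputable def C4 (t T : ℝ) (φ : ℕ → ℝ → ℝ) (j4 j3 j2 j1 : ℕ) : ℝ :=
  ∫ s4 in t..T, φ j4 s4 * ∫ s3 in t..s4, φ j3 s3 *
    ∫ s2 in t..s3, φ j2 s2 * ∫ s1 in t..s2, φ j1 s1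

/-! ### polynomial representation -/


lemma legendreP_is_poly (n : ℕ) :
    ∃ f : Polynomial ℝ, f.natDegree ≤ n ∧ ∀ x, legendreP n x = f.eval x := by
  induction n using two_step with
  | h0 => exact ⟨1, by simp, fun x => by simp [legendreP]⟩
  | h1 => exact ⟨Polynomial.X, by simp, fun x => by simp [legendreP]⟩
  | hstep n h1 h2 =>
    obtain ⟨f0, hd0, he0⟩ := h1
    obtain ⟨f1, hd1, he1⟩ := h2
    refine ⟨Polynomial.C ((2*(n:ℝ)+3)/((n:ℝ)+2)) * Polynomial.X * f1
      - Polynomial.C (((n:ℝ)+1)/((n:ℝ)+2)) * f0, ?_, fun x => ?_⟩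
    · refine le_trans (Polynomial.natDegree_sub_le _ _) (max_le ?_ ?_)
      · refine le_trans (Polynomial.natDegree_mul_le) ?_
        have : (Polynomial.C ((2*(n:ℝ)+3)/((n:ℝ)+2)) * Polynomial.X).natDegree ≤ 1 :=
          le_trans (Polynomial.natDegree_mul_le) (by simp)
        omega
      · exact le_trans (Polynomial.natDegree_mul_le) (by simp; omega)
    · rw [legendreP_add_two, he0, he1]
      have hn2 : (n : ℝ) + 2 ≠ 0 := by positivity
      simp only [Polynomial.eval_sub, Polynomial.eval_mul, Polynomial.eval_C, Polynomial.eval_X]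
      field_simp

/-! ### the unnormalized shifted system on [t, T] -/

noncomputable def uaff (t T : ℝ) (x : ℝ) : ℝ := (2 * x - T - t) / (T - t)

noncomputable def pleg (t T : ℝ) (j : ℕ) (x : ℝ) : ℝ := legendreP j (uaff t T x)

noncomputable def tleg (t T : ℝ) : ℕ → ℝ → ℝ
  | 0 => fun x => x - t
  | (b + 1) => fun x =>
      (T - t) / 2 * ((pleg t T (b + 2) x - pleg t T b x) / (2 * ((b : ℝ) + 1) + 1))

variable {t T : ℝ}

lemma uaff_left (hT : t < T) : uaff t T t = -1 := by
  have : T - t ≠ 0 := by linarith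
  simp only [uaff]
  field_simp
  ring

lemma uaff_right (hT : t < T) : uaff t T T = 1 := by
  have : T - t ≠ 0 := by linarith
  simp only [uaff]
  field_simp
  ring

lemma uaff_reflect (x : ℝ) : uaff t T (t + T - x) = -uaff t T x := by
  simp only [uaff]
  ring

lemma uaff_hasDerivAt (hT : t < T) (x : ℝ) : HasDerivAt (uaff t T) (2 / (T - t)) x := by
  have h : HasDerivAt (fun x : ℝ => (2 * x - T - t) / (T - t)) (2 / (T - t)) x := by
    have := (((hasDerivAt_id x).const_mul (2:ℝ)).sub_const T).sub_const t
    simpa using this.div_const (T - t)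
  exact h

@[fun_prop]
lemma uaff_continuous : Continuous (uaff t T) := by
  unfold uaff; fun_prop

@[fun_prop]
lemma pleg_continuous (j : ℕ) : Continuous (pleg t T j) :=
  (legendreP_continuous j).comp uaff_continuous

lemma pleg_left (hT : t < T) (j : ℕ) : pleg t T j t = (-1) ^ j := by
  rw [pleg, uaff_left hT, legendreP_neg_one_val]

lemma pleg_right (hT : t < T) (j : ℕ) : pleg t T j T = 1 := by
  rw [pleg, uaff_right hT, legendreP_one_val]

lemma pleg_reflect (j : ℕ) (x : ℝ) : pleg t T j (t + T - x) = (-1) ^ j * pleg t T j x := by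
  rw [pleg, uaff_reflect, legendreP_parity, pleg]

lemma pleg_hasDerivAt (hT : t < T) (j : ℕ) (x : ℝ) :
    HasDerivAt (pleg t T j) (legendreP' j (uaff t T x) * (2 / (T - t))) x :=
  (legendreP_hasDerivAt j (uaff t T x)).comp x (uaff_hasDerivAt hT x)

@[fun_prop]
lemma tleg_continuous (b : ℕ) : Continuous (tleg t T b) := by
  cases b with
  | zero => simpa [tleg] using (continuous_sub_right t)
  | succ m =>
    exact continuous_const.mul (((pleg_continuous _).sub (pleg_continuous _)).div_const _)

lemma tleg_hasDerivAt (hT : t < T) (b : ℕ) (x : ℝ) :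
    HasDerivAt (tleg t T b) (pleg t T b x) x := by
  cases b with
  | zero =>
    have : HasDerivAt (fun x : ℝ => x - t) 1 x := (hasDerivAt_id x).sub_const t
    simpa [tleg, pleg, legendreP] using this
  | succ m =>
    have hd := ((pleg_hasDerivAt hT (m + 2) x).sub (pleg_hasDerivAt hT m x)).div_const
        (2 * ((m : ℝ) + 1) + 1)
    have := hd.const_mul ((T - t) / 2)
    have hne : T - t ≠ 0 := by linarith
    refine this.congr_deriv ?_
    rw [legendreP'_step m (uaff t T x)]
    simp only [pleg]
    field_simp [pleg]
    ring

lemma tleg_left (hT : t < T) (b : ℕ) : tleg t T b t = 0 := by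
  cases b with
  | zero => simp [tleg]
  | succ m => simp [tleg, pleg_left hT, pow_succ]

lemma tleg_right_succ (hT : t < T) (m : ℕ) : tleg t T (m + 1) T = 0 := by
  simp [tleg, pleg_right hT]

lemma tleg_zero_right : tleg t T 0 T = T - t := rfl

lemma tleg_reflect_succ (m : ℕ) (x : ℝ) :
    tleg t T (m + 1) (t + T - x) = (-1) ^ m * tleg t T (m + 1) x := by
  simp only [tleg, pleg_reflect]
  have : ((-1 : ℝ)) ^ (m + 2) = (-1) ^ m := by
    rw [pow_succ, pow_succ]; ring
  rw [this]
  ring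

/-! ### integral helpers -/

lemma ftc {a b : ℝ} {f F : ℝ → ℝ} (hd : ∀ x, HasDerivAt F (f x) x) (hf : Continuous f) :
    ∫ x in a..b, f x = F b - F a :=
  intervalIntegral.integral_eq_sub_of_hasDerivAt (fun x _ => hd x) (hf.intervalIntegrable _ _)

lemma ibp {a b : ℝ} {u v u' v' : ℝ → ℝ} (hu : ∀ x, HasDerivAt u (u' x) x)
    (hv : ∀ x, HasDerivAt v (v' x) x) (hu' : Continuous u') (hv' : Continuous v') :
    ∫ x in a..b, u x * v' x = u b * v b - u a * v a - ∫ x in a..b, u' x * v x :=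
  intervalIntegral.integral_mul_deriv_eq_deriv_mul (fun x _ => hu x) (fun x _ => hv x)
    (hu'.intervalIntegrable _ _) (hv'.intervalIntegrable _ _)

lemma integral_comb2 {a b : ℝ} {f g : ℝ → ℝ} (hf : Continuous f) (hg : Continuous g)
    (c1 c2 : ℝ) : ∫ x in a..b, (c1 * f x + c2 * g x) =
      c1 * (∫ x in a..b, f x) + c2 * ∫ x in a..b, g x := by
  rw [intervalIntegral.integral_add ((show Continuous fun x => c1 * f x from continuous_const.mul hf).intervalIntegrable _ _)
      ((show Continuous fun x => c2 * g x from continuous_const.mul hg).intervalIntegrable _ _),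
    intervalIntegral.integral_const_mul, intervalIntegral.integral_const_mul]

lemma integral_comb3 {a b : ℝ} {f g h : ℝ → ℝ} (hf : Continuous f) (hg : Continuous g)
    (hh : Continuous h) (c1 c2 c3 : ℝ) :
    ∫ x in a..b, (c1 * f x + c2 * g x + c3 * h x) =
      c1 * (∫ x in a..b, f x) + c2 * (∫ x in a..b, g x) + c3 * ∫ x in a..b, h x := by
  rw [intervalIntegral.integral_add
      ((show Continuous fun x => c1 * f x + c2 * g x from (continuous_const.mul hf).add (continuous_const.mul hg)).intervalIntegrable _ _)
      ((show Continuous fun x => c3 * h x from continuous_const.mul hh).intervalIntegrable _ _),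
    integral_comb2 hf hg, intervalIntegral.integral_const_mul]

variable (t T : ℝ)

lemma reflect_integral_zero {f : ℝ → ℝ} (hf : Continuous f)
    (hodd : ∀ x, f (t + T - x) = -f x) : ∫ x in t..T, f x = 0 := by
  have h1 : ∫ x in t..T, f (t + T - x) = ∫ x in (t + T - T)..(t + T - t), f x :=
    intervalIntegral.integral_comp_sub_left f (t + T)
  have h2 : ∫ x in t..T, f (t + T - x) = -∫ x in t..T, f x := by
    rw [show (fun x => f (t + T - x)) = fun x => -f x from funext hodd]
    exact intervalIntegral.integral_neg
  rw [h2] at h1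
  simp only [add_sub_cancel_right, add_sub_cancel_left] at h1
  linarith

variable {t T}

/-! ### moments and orthogonality -/

lemma moment_zero (hT : t < T) : ∀ k n : ℕ, k < n →
    (∫ x in t..T, (uaff t T x) ^ k * pleg t T n x) = 0 := by
  intro k
  induction k with
  | zero =>
    intro n hn
    obtain ⟨m, rfl⟩ : ∃ m, n = m + 1 := ⟨n - 1, by omega⟩
    have h0 : (∫ x in t..T, (uaff t T x) ^ 0 * pleg t T (m+1) x)
        = ∫ x in t..T, pleg t T (m+1) x := by
      congr 1; funext x; simp
    rw [h0, ftc (tleg_hasDerivAt hT (m+1)) (pleg_continuous _), tleg_right_succ hT,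
      tleg_left hT, sub_zero]
  | succ k ih =>
    intro n hn
    obtain ⟨m, rfl⟩ : ∃ m, n = m + 1 := ⟨n - 1, by omega⟩
    have hL : T - t ≠ 0 := by linarith
    have hu : ∀ x, HasDerivAt (fun y => (uaff t T y) ^ (k+1))
        (((k : ℝ)+1) * (uaff t T x) ^ k * (2 / (T - t))) x := by
      intro x
      have := (uaff_hasDerivAt hT x).pow (k+1)
      exact this.congr_deriv (by simp)
    have key := ibp (a := t) (b := T) hu (tleg_hasDerivAt hT (m+1))
      (by fun_prop) (pleg_continuous _)
    rw [tleg_right_succ hT, tleg_left hT] at key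
    simp only [mul_zero, sub_zero, zero_sub] at key
    -- rewrite the RHS integrand
    have hrw : ∀ x, ((k : ℝ)+1) * (uaff t T x) ^ k * (2 / (T - t)) * tleg t T (m+1) x
        = (((k:ℝ)+1)/(2*(m:ℝ)+3)) * ((uaff t T x) ^ k * pleg t T (m+2) x)
          + (-(((k:ℝ)+1)/(2*(m:ℝ)+3))) * ((uaff t T x) ^ k * pleg t T m x) := by
      intro x
      show _ = _
      have h3 : (2*((m:ℝ)+1)+1) = 2*(m:ℝ)+3 := by ring
      simp only [tleg, h3]
      field_simp
      ring
    rw [intervalIntegral.integral_congr (g :=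
        fun x => (((k:ℝ)+1)/(2*(m:ℝ)+3)) * ((uaff t T x) ^ k * pleg t T (m+2) x)
          + (-(((k:ℝ)+1)/(2*(m:ℝ)+3))) * ((uaff t T x) ^ k * pleg t T m x))
        (fun x _ => hrw x),
      integral_comb2 (by fun_prop) (by fun_prop)] at key
    rw [ih (m+2) (by omega), ih m (by omega)] at key
    simpa using key

lemma orth_lt (hT : t < T) {i j : ℕ} (hij : i < j) :
    (∫ x in t..T, pleg t T i x * pleg t T j x) = 0 := by
  obtain ⟨f, hdeg, hval⟩ := legendreP_is_poly i
  have hrw : ∀ x, pleg t T i x * pleg t T j x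
      = ∑ m ∈ Finset.range (i + 1), f.coeff m * ((uaff t T x) ^ m * pleg t T j x) := by
    intro x
    rw [pleg, hval, Polynomial.eval_eq_sum_range' (lt_of_le_of_lt hdeg (Nat.lt_succ_self i)),
      Finset.sum_mul]
    simp only [mul_assoc]
  rw [intervalIntegral.integral_congr (g := fun x =>
      ∑ m ∈ Finset.range (i + 1), f.coeff m * ((uaff t T x) ^ m * pleg t T j x))
      (fun x _ => hrw x),
    intervalIntegral.integral_finset_sum
      (fun m _ => (show Continuous fun x => f.coeff m * ((uaff t T x) ^ m * pleg t T j x) from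
        continuous_const.mul (by fun_prop : Continuous fun x =>
        (uaff t T x) ^ m * pleg t T j x)).intervalIntegrable _ _)]
  refine Finset.sum_eq_zero fun m hm => ?_
  rw [intervalIntegral.integral_const_mul, moment_zero hT m j
    (lt_of_lt_of_le (Finset.mem_range.mp hm) hij), mul_zero]

lemma orth_ne (hT : t < T) {i j : ℕ} (hij : i ≠ j) :
    (∫ x in t..T, pleg t T i x * pleg t T j x) = 0 := by
  rcases lt_or_gt_of_ne hij with h | h
  · exact orth_lt hT h
  · rw [intervalIntegral.integral_congr (g := fun x => pleg t T j x * pleg t T i x)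
      (fun x _ => mul_comm _ _)]
    exact orth_lt hT h

lemma norm_sq (hT : t < T) : ∀ n : ℕ,
    (∫ x in t..T, pleg t T n x * pleg t T n x) = (T - t) / (2 * (n : ℝ) + 1) := by
  have hL : T - t ≠ 0 := by linarith
  intro n
  induction n using two_step with
  | h0 =>
    have : ∀ x, pleg t T 0 x * pleg t T 0 x = (1:ℝ) := by
      intro x; simp [pleg, legendreP]
    rw [intervalIntegral.integral_congr (g := fun _ => (1:ℝ)) (fun x _ => this x)]
    simp
  | h1 =>
    have hd : ∀ x, HasDerivAt (fun y => (T - t) / 6 * (uaff t T y) ^ 3)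
        (pleg t T 1 x * pleg t T 1 x) x := by
      intro x
      have := ((uaff_hasDerivAt hT x).pow 3).const_mul ((T - t)/6)
      refine this.congr_deriv ?_
      rw [show (3:ℕ) - 1 = 2 from rfl, Nat.cast_ofNat]
      simp only [pleg, legendreP, uaff]
      field_simp
      ring
    rw [ftc hd (by fun_prop), uaff_right hT, uaff_left hT]
    norm_num
    ring
  | hstep m ih1 ih2 =>
    -- key pointwise identity
    have e1 : ∀ x, ((m:ℝ)+2) * pleg t T (m+2) x
        = (2*(m:ℝ)+3) * uaff t T x * pleg t T (m+1) x - ((m:ℝ)+1) * pleg t T m x := by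
      intro x
      simp only [pleg, legendreP_add_two]
      have : (m:ℝ) + 2 ≠ 0 := by positivity
      field_simp
    have e2 : ∀ x, (2*(m:ℝ)+5) * (uaff t T x * pleg t T (m+2) x)
        = ((m:ℝ)+3) * pleg t T (m+3) x + ((m:ℝ)+2) * pleg t T (m+1) x := by
      intro x
      have h := legendreP_add_two (m+1) (uaff t T x)
      simp only [pleg]
      have hc : ((m:ℝ)+1) + 2 ≠ 0 := by positivity
      rw [show ((m:ℕ)+3) = (m+1)+2 from rfl, h]
      push_cast
      field_simp
      ring
    have key : ∀ x, (((m:ℝ)+2) * (2*(m:ℝ)+5)) * (pleg t T (m+2) x * pleg t T (m+2) x)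
        = ((2*(m:ℝ)+3)*((m:ℝ)+3)) * (pleg t T (m+1) x * pleg t T (m+3) x)
          + ((2*(m:ℝ)+3)*((m:ℝ)+2)) * (pleg t T (m+1) x * pleg t T (m+1) x)
          + (-(((m:ℝ)+1)*(2*(m:ℝ)+5))) * (pleg t T m x * pleg t T (m+2) x) := by
      intro x
      linear_combination ((2*(m:ℝ)+5) * pleg t T (m+2) x) * e1 x
        + ((2*(m:ℝ)+3) * pleg t T (m+1) x) * e2 x
    have hI : (((m:ℝ)+2) * (2*(m:ℝ)+5)) * (∫ x in t..T, pleg t T (m+2) x * pleg t T (m+2) x)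
        = ((2*(m:ℝ)+3)*((m:ℝ)+3)) * (∫ x in t..T, pleg t T (m+1) x * pleg t T (m+3) x)
          + ((2*(m:ℝ)+3)*((m:ℝ)+2)) * (∫ x in t..T, pleg t T (m+1) x * pleg t T (m+1) x)
          + (-(((m:ℝ)+1)*(2*(m:ℝ)+5))) * (∫ x in t..T, pleg t T m x * pleg t T (m+2) x) := by
      rw [← intervalIntegral.integral_const_mul,
        intervalIntegral.integral_congr (g := fun x =>
          ((2*(m:ℝ)+3)*((m:ℝ)+3)) * (pleg t T (m+1) x * pleg t T (m+3) x)
          + ((2*(m:ℝ)+3)*((m:ℝ)+2)) * (pleg t T (m+1) x * pleg t T (m+1) x)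
          + (-(((m:ℝ)+1)*(2*(m:ℝ)+5))) * (pleg t T m x * pleg t T (m+2) x))
          (fun x _ => key x),
        integral_comb3 (by fun_prop) (by fun_prop) (by fun_prop)]
    rw [orth_ne hT (i := m+1) (j := m+3) (by omega),
      orth_ne hT (i := m) (j := m+2) (by omega)] at hI
    have h3 : (2*(m:ℝ)+3) ≠ 0 := by positivity
    have h5 : (2*(m:ℝ)+5) ≠ 0 := by positivity
    have hB : (∫ x in t..T, pleg t T (m+1) x * pleg t T (m+1) x) * (2*(m:ℝ)+3) = T - t := by
      rw [ih2, show (2*((m+1:ℕ):ℝ)+1) = 2*(m:ℝ)+3 by push_cast; ring,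
        div_mul_cancel₀ _ h3]
    rw [eq_div_iff (by positivity : 2*((m+2 : ℕ):ℝ)+1 ≠ 0)]
    apply mul_left_cancel₀ (show ((m:ℝ)+2)*(2*(m:ℝ)+3) ≠ 0 by positivity)
    push_cast
    linear_combination (2*(m:ℝ)+3) * hI + ((m:ℝ)+2)*(2*(m:ℝ)+3) * hB

/-! ### helpers for primitives -/

lemma cont_of_deriv {F f : ℝ → ℝ} (h : ∀ x, HasDerivAt F (f x) x) : Continuous F :=
  continuous_iff_continuousAt.mpr fun x => (h x).continuousAt

lemma ftc2 {f : ℝ → ℝ} (hf : Continuous f) (a y : ℝ) :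
    HasDerivAt (fun u => ∫ x in a..u, f x) (f y) y :=
  intervalIntegral.integral_hasDerivAt_right (hf.intervalIntegrable _ _)
    (hf.stronglyMeasurable.stronglyMeasurableAtFilter) hf.continuousAt

/-! ### the building blocks of C4 -/

noncomputable def Gf (t T : ℝ) (a b : ℕ) (y : ℝ) : ℝ :=
  ∫ x in t..y, pleg t T a x * tleg t T b x

noncomputable def Wf (t T : ℝ) (a b : ℕ) (y : ℝ) : ℝ :=
  ∫ x in t..y, pleg t T a x * tleg t T b x * tleg t T b x

noncomputable def Zf (t T : ℝ) (a b : ℕ) : ℝ :=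
  ∫ x in t..T, pleg t T a x * tleg t T b x * tleg t T b x * tleg t T a x

noncomputable def NN (t T : ℝ) (a b : ℕ) : ℝ :=
  ∫ y in t..T, pleg t T a y * ∫ z in t..y, pleg t T b z * Gf t T a b z

variable {t T : ℝ}

lemma Gf_hasDerivAt (a b : ℕ) (y : ℝ) :
    HasDerivAt (Gf t T a b) (pleg t T a y * tleg t T b y) y :=
  ftc2 (by fun_prop) t y

@[fun_prop]
lemma Gf_continuous (a b : ℕ) : Continuous (Gf t T a b) :=
  cont_of_deriv (Gf_hasDerivAt a b)

lemma Wf_hasDerivAt (a b : ℕ) (y : ℝ) :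
    HasDerivAt (Wf t T a b) (pleg t T a y * tleg t T b y * tleg t T b y) y :=
  ftc2 (by fun_prop) t y

@[fun_prop]
lemma Wf_continuous (a b : ℕ) : Continuous (Wf t T a b) :=
  cont_of_deriv (Wf_hasDerivAt a b)

lemma Gf_base (a b : ℕ) : Gf t T a b t = 0 := intervalIntegral.integral_same

lemma Wf_base (a b : ℕ) : Wf t T a b t = 0 := intervalIntegral.integral_same

/-- scaling: C4 for the orthonormal system in terms of the unnormalized one -/
lemma C4_scaling (hT : t < T) (a b : ℕ) :
    C4 t T (legendreSys t T) a b a b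
      = ((2 * (a : ℝ) + 1) / (T - t)) * ((2 * (b : ℝ) + 1) / (T - t)) * NN t T a b := by
  have hL : (0:ℝ) < T - t := by linarith
  set ca := Real.sqrt ((2 * (a : ℝ) + 1) / (T - t)) with hca
  set cb := Real.sqrt ((2 * (b : ℝ) + 1) / (T - t)) with hcb
  have hsys : ∀ (j : ℕ) (x : ℝ), legendreSys t T j x
      = Real.sqrt ((2 * (j : ℝ) + 1) / (T - t)) * pleg t T j x := fun j x => rfl
  have hca2 : ca * ca = (2 * (a : ℝ) + 1) / (T - t) := by
    rw [hca]; exact Real.mul_self_sqrt (le_of_lt (by positivity))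
  have hcb2 : cb * cb = (2 * (b : ℝ) + 1) / (T - t) := by
    rw [hcb]; exact Real.mul_self_sqrt (le_of_lt (by positivity))
  have s1 : ∀ s2 : ℝ, (∫ s1 in t..s2, legendreSys t T b s1) = cb * tleg t T b s2 := by
    intro s2
    rw [intervalIntegral.integral_congr (g := fun x => cb * pleg t T b x)
        (fun x _ => hsys b x),
      intervalIntegral.integral_const_mul,
      ftc (tleg_hasDerivAt hT b) (pleg_continuous b), tleg_left hT, sub_zero]
  have s2 : ∀ s3 : ℝ, (∫ s2 in t..s3, legendreSys t T a s2 * ∫ s1 in t..s2, legendreSys t T b s1)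
      = (ca * cb) * Gf t T a b s3 := by
    intro s3
    rw [intervalIntegral.integral_congr (g := fun x => (ca * cb) * (pleg t T a x * tleg t T b x))
        (fun x _ => by rw [s1 x, hsys]; ring),
      intervalIntegral.integral_const_mul]
    rfl
  have s3 : ∀ s4 : ℝ, (∫ s3 in t..s4, legendreSys t T b s3 *
        ∫ s2 in t..s3, legendreSys t T a s2 * ∫ s1 in t..s2, legendreSys t T b s1)
      = (ca * (cb * cb)) * ∫ s3 in t..s4, pleg t T b s3 * Gf t T a b s3 := by
    intro s4
    rw [intervalIntegral.integral_congr
        (g := fun x => (ca * (cb * cb)) * (pleg t T b x * Gf t T a b x))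
        (fun x _ => by rw [s2 x, hsys]; ring),
      intervalIntegral.integral_const_mul]
  have s4 : C4 t T (legendreSys t T) a b a b
      = ((ca * ca) * (cb * cb)) * NN t T a b := by
    rw [C4, intervalIntegral.integral_congr
        (g := fun y => ((ca * ca) * (cb * cb)) *
          (pleg t T a y * ∫ z in t..y, pleg t T b z * Gf t T a b z))
        (fun y _ => by rw [s3 y, hsys]; ring),
      intervalIntegral.integral_const_mul]
    rfl
  rw [s4, hca2, hcb2]

/-- the inner double integral after one integration by parts -/
lemma inner_ibp (hT : t < T) (a b : ℕ) (y : ℝ) :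
    (∫ z in t..y, pleg t T b z * Gf t T a b z)
      = tleg t T b y * Gf t T a b y - Wf t T a b y := by
  have h := ibp (a := t) (b := y) (u := Gf t T a b) (v := tleg t T b)
    (u' := fun x => pleg t T a x * tleg t T b x) (v' := pleg t T b)
    (Gf_hasDerivAt a b) (tleg_hasDerivAt hT b) (by fun_prop) (by fun_prop)
  rw [Gf_base, tleg_left hT, mul_zero, sub_zero] at h
  rw [intervalIntegral.integral_congr (g := fun z => Gf t T a b z * pleg t T b z)
      (fun z _ => mul_comm _ _), h, mul_comm (Gf t T a b y) (tleg t T b y)]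
  rfl

/-- main reduction of NN -/
lemma NN_eq (hT : t < T) (a b : ℕ) :
    NN t T a b = Gf t T a b T * Gf t T a b T / 2
      - tleg t T a T * Wf t T a b T + Zf t T a b := by
  have hsplit : NN t T a b = (∫ y in t..T, pleg t T a y * (tleg t T b y * Gf t T a b y))
      - ∫ y in t..T, pleg t T a y * Wf t T a b y := by
    rw [NN, intervalIntegral.integral_congr (g := fun y =>
        pleg t T a y * (tleg t T b y * Gf t T a b y) - pleg t T a y * Wf t T a b y)
        (fun y _ => by rw [inner_ibp hT a b y]; ring),
      intervalIntegral.integral_sub ((by fun_prop : Continuous fun y =>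
        pleg t T a y * (tleg t T b y * Gf t T a b y)).intervalIntegrable _ _)
        ((by fun_prop : Continuous fun y => pleg t T a y * Wf t T a b y).intervalIntegrable _ _)]
  have h1 : (∫ y in t..T, pleg t T a y * (tleg t T b y * Gf t T a b y))
      = Gf t T a b T * Gf t T a b T / 2 := by
    have hd : ∀ y, HasDerivAt (fun u => Gf t T a b u * Gf t T a b u / 2)
        (pleg t T a y * (tleg t T b y * Gf t T a b y)) y := by
      intro y
      have := ((Gf_hasDerivAt (t := t) (T := T) a b y).mul (Gf_hasDerivAt (t := t) (T := T) a b y)).div_const 2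
      refine this.congr_deriv ?_
      ring
    rw [ftc hd (by fun_prop), Gf_base, mul_zero, zero_div, sub_zero]
  have h2 : (∫ y in t..T, pleg t T a y * Wf t T a b y)
      = tleg t T a T * Wf t T a b T - Zf t T a b := by
    have h := ibp (a := t) (b := T) (u := Wf t T a b) (v := tleg t T a)
      (u' := fun x => pleg t T a x * tleg t T b x * tleg t T b x) (v' := pleg t T a)
      (Wf_hasDerivAt a b) (tleg_hasDerivAt hT a) (by fun_prop) (by fun_prop)
    rw [Wf_base, zero_mul, sub_zero] at h
    rw [intervalIntegral.integral_congr (g := fun y => Wf t T a b y * pleg t T a y)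
        (fun z _ => mul_comm _ _), h, mul_comm (Wf t T a b T) (tleg t T a T)]
    rfl
  rw [hsplit, h1, h2]
  ring

/-! ### values of the building blocks -/

lemma neg_one_pow_mul_self (i : ℕ) : ((-1:ℝ)) ^ i * ((-1:ℝ)) ^ i = 1 := by
  rw [← pow_add]
  exact Even.neg_one_pow ⟨i, by ring⟩

lemma pleg_zero_eq_one (x : ℝ) : pleg t T 0 x = 1 := rfl

lemma tleg_zero_eq (x : ℝ) : tleg t T 0 x = x - t := rfl

lemma tleg_succ_eq (m : ℕ) (x : ℝ) : tleg t T (m+1) x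
    = ((T - t) / 2 / (2*(m:ℝ)+3)) * pleg t T (m+2) x
      - ((T - t) / 2 / (2*(m:ℝ)+3)) * pleg t T m x := by
  show (T - t) / 2 * ((pleg t T (m + 2) x - pleg t T m x) / (2 * ((m : ℝ) + 1) + 1)) = _
  have : 2 * ((m:ℝ)+1) + 1 = 2*(m:ℝ)+3 := by ring
  rw [this]
  ring

lemma tleg_zero_expand (hT : t < T) (x : ℝ) :
    tleg t T 0 x = (T - t)/2 * pleg t T 1 x + (T - t)/2 * pleg t T 0 x := by
  have hL : T - t ≠ 0 := by linarith
  show x - t = _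
  show _ = (T - t)/2 * ((2 * x - T - t)/(T - t)) + (T - t)/2 * 1
  field_simp
  ring

/-- `∫ tb²` for `b ≥ 1` -/
lemma Qval (hT : t < T) (m : ℕ) :
    (∫ x in t..T, tleg t T (m+1) x * tleg t T (m+1) x)
    = ((T - t)/2/(2*(m:ℝ)+3))^2 * ((T - t)/(2*(m:ℝ)+5) + (T - t)/(2*(m:ℝ)+1)) := by
  set c := (T - t)/2/(2*(m:ℝ)+3) with hc
  have key : ∀ x, tleg t T (m+1) x * tleg t T (m+1) x
      = (c*c) * (pleg t T (m+2) x * pleg t T (m+2) x)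
        + (-(2*c*c)) * (pleg t T m x * pleg t T (m+2) x)
        + (c*c) * (pleg t T m x * pleg t T m x) := by
    intro x
    rw [tleg_succ_eq]
    ring
  rw [intervalIntegral.integral_congr (g := fun x =>
      (c*c) * (pleg t T (m+2) x * pleg t T (m+2) x)
        + (-(2*c*c)) * (pleg t T m x * pleg t T (m+2) x)
        + (c*c) * (pleg t T m x * pleg t T m x)) (fun x _ => key x),
    integral_comb3 (by fun_prop) (by fun_prop) (by fun_prop),
    norm_sq hT, norm_sq hT, orth_ne hT (by omega)]
  push_cast
  ring

/-- `Gf` at `T` for `b = m+1` -/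
lemma GfTval (hT : t < T) (a m : ℕ) :
    Gf t T a (m+1) T = ((T - t)/2/(2*(m:ℝ)+3))
      * ((∫ x in t..T, pleg t T a x * pleg t T (m+2) x)
        - (∫ x in t..T, pleg t T a x * pleg t T m x)) := by
  set c := (T - t)/2/(2*(m:ℝ)+3) with hc
  have key : ∀ x, pleg t T a x * tleg t T (m+1) x
      = c * (pleg t T a x * pleg t T (m+2) x) + (-c) * (pleg t T a x * pleg t T m x) := by
    intro x
    rw [tleg_succ_eq]
    ring
  rw [Gf, intervalIntegral.integral_congr (g := fun x =>
      c * (pleg t T a x * pleg t T (m+2) x) + (-c) * (pleg t T a x * pleg t T m x))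
      (fun x _ => key x),
    integral_comb2 (by fun_prop) (by fun_prop)]
  ring

lemma GfT0val (hT : t < T) (a : ℕ) :
    Gf t T a 0 T = (T - t)/2 * ((∫ x in t..T, pleg t T a x * pleg t T 1 x)
      + (∫ x in t..T, pleg t T a x * pleg t T 0 x)) := by
  have key : ∀ x, pleg t T a x * tleg t T 0 x
      = (T - t)/2 * (pleg t T a x * pleg t T 1 x) + (T - t)/2 * (pleg t T a x * pleg t T 0 x) := by
    intro x
    rw [tleg_zero_expand hT]
    ring
  rw [Gf, intervalIntegral.integral_congr (g := fun x =>
      (T - t)/2 * (pleg t T a x * pleg t T 1 x) + (T - t)/2 * (pleg t T a x * pleg t T 0 x))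
      (fun x _ => key x),
    integral_comb2 (by fun_prop) (by fun_prop)]
  ring

/-- `Zf` vanishes by parity when both indices are ≥ 1 -/
lemma Zf_zero (hT : t < T) (i j : ℕ) : Zf t T (i+1) (j+1) = 0 := by
  apply reflect_integral_zero t T (by fun_prop)
  intro x
  rw [pleg_reflect, tleg_reflect_succ, tleg_reflect_succ]
  have e1 := neg_one_pow_mul_self i
  have e2 := neg_one_pow_mul_self j
  rw [pow_succ]
  linear_combination (-(pleg t T (i+1) x * tleg t T (j+1) x * tleg t T (j+1) x
      * tleg t T (i+1) x) * ((-1:ℝ)^j * (-1:ℝ)^j)) * e1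
    + (-(pleg t T (i+1) x * tleg t T (j+1) x * tleg t T (j+1) x * tleg t T (i+1) x)) * e2

/-- ∫ pa·ta·g where g is the centered linear function, a ≥ 1 -/
lemma int_pata_g (hT : t < T) (i : ℕ) :
    (∫ x in t..T, pleg t T (i+1) x * tleg t T (i+1) x * (x - t - (T - t)/2))
    = -(1/2) * ∫ x in t..T, tleg t T (i+1) x * tleg t T (i+1) x := by
  have hu : ∀ x, HasDerivAt (fun y : ℝ => y - t - (T - t)/2) 1 x := by
    intro x
    simpa using ((hasDerivAt_id x).sub_const t).sub_const ((T - t)/2)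
  have hv : ∀ x, HasDerivAt (fun y => tleg t T (i+1) y * tleg t T (i+1) y / 2)
      (pleg t T (i+1) x * tleg t T (i+1) x) x := by
    intro x
    have := ((tleg_hasDerivAt hT (i+1) x).mul (tleg_hasDerivAt hT (i+1) x)).div_const 2
    refine this.congr_deriv ?_
    ring
  have h := ibp (a := t) (b := T) (u := fun y : ℝ => y - t - (T - t)/2)
    (v := fun y => tleg t T (i+1) y * tleg t T (i+1) y / 2)
    (u' := fun _ => 1) (v' := fun x => pleg t T (i+1) x * tleg t T (i+1) x)
    hu hv continuous_const (by fun_prop)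
  rw [tleg_right_succ hT, tleg_left hT] at h
  simp only [mul_zero, zero_mul, zero_div, sub_zero, zero_sub, mul_div_assoc] at h
  have hgoal : (∫ x in t..T, pleg t T (i+1) x * tleg t T (i+1) x * (x - t - (T - t)/2))
      = ∫ x in t..T, (x - t - (T - t)/2) * (pleg t T (i+1) x * tleg t T (i+1) x) :=
    intervalIntegral.integral_congr (fun x _ => by ring)
  rw [hgoal, h]
  rw [← intervalIntegral.integral_const_mul, ← intervalIntegral.integral_neg]
  apply intervalIntegral.integral_congr
  intro x _
  ring

/-- `Zf a 0` for `a ≥ 1` -/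
lemma Zf_a0 (hT : t < T) (i : ℕ) :
    Zf t T (i+1) 0 = -((T - t)/2) * ∫ x in t..T, tleg t T (i+1) x * tleg t T (i+1) x := by
  have key : ∀ x, pleg t T (i+1) x * tleg t T 0 x * tleg t T 0 x * tleg t T (i+1) x
      = 1 * (pleg t T (i+1) x * tleg t T (i+1) x * (x - t - (T-t)/2) * (x - t - (T-t)/2))
        + ((T-t)) * (pleg t T (i+1) x * tleg t T (i+1) x * (x - t - (T-t)/2))
        + ((T-t)^2/4) * (pleg t T (i+1) x * tleg t T (i+1) x) := by
    intro x
    rw [tleg_zero_eq]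
    ring
  rw [Zf, intervalIntegral.integral_congr (g := fun x =>
      1 * (pleg t T (i+1) x * tleg t T (i+1) x * (x - t - (T-t)/2) * (x - t - (T-t)/2))
        + ((T-t)) * (pleg t T (i+1) x * tleg t T (i+1) x * (x - t - (T-t)/2))
        + ((T-t)^2/4) * (pleg t T (i+1) x * tleg t T (i+1) x)) (fun x _ => key x),
    integral_comb3 (by fun_prop) (by fun_prop) (by fun_prop)]
  -- first piece: odd
  have hodd1 : (∫ x in t..T, pleg t T (i+1) x * tleg t T (i+1) x * (x - t - (T-t)/2)
      * (x - t - (T-t)/2)) = 0 := by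
    apply reflect_integral_zero t T (by fun_prop)
    intro x
    rw [pleg_reflect, tleg_reflect_succ]
    have e1 := neg_one_pow_mul_self i
    rw [pow_succ]
    linear_combination (-(pleg t T (i+1) x * tleg t T (i+1) x * (x - t - (T - t)/2)
      * (x - t - (T - t)/2))) * e1
  -- third piece: odd
  have hodd3 : (∫ x in t..T, pleg t T (i+1) x * tleg t T (i+1) x) = 0 := by
    apply reflect_integral_zero t T (by fun_prop)
    intro x
    rw [pleg_reflect, tleg_reflect_succ]
    have e1 := neg_one_pow_mul_self i
    rw [pow_succ]
    linear_combination (-(pleg t T (i+1) x * tleg t T (i+1) x)) * e1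
  rw [hodd1, int_pata_g hT, hodd3]
  ring

/-! ### power integrals and remaining small pieces -/

lemma int_pow_sub (k : ℕ) :
    (∫ x in t..T, (x - t)^(k+1)) = (T - t)^(k+2) / ((k:ℝ)+2) := by
  have hd : ∀ x : ℝ, HasDerivAt (fun y : ℝ => (y - t)^(k+2) / ((k:ℝ)+2)) ((x - t)^(k+1)) x := by
    intro x
    have h1 : HasDerivAt (fun y : ℝ => y - t) 1 x := (hasDerivAt_id x).sub_const t
    have := (h1.pow (k+2)).div_const ((k:ℝ)+2)
    refine this.congr_deriv ?_
    have : ((k:ℝ)+2) ≠ 0 := by positivity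
    push_cast
    field_simp
  rw [ftc hd (by fun_prop)]
  simp

lemma Wf00_T : Wf t T 0 0 T = (T - t)^3 / 3 := by
  rw [Wf, intervalIntegral.integral_congr (g := fun x => (x - t)^(1+1))
    (fun x _ => by rw [pleg_zero_eq_one, tleg_zero_eq]; ring), int_pow_sub 1]
  norm_num

lemma Zf00 : Zf t T 0 0 = (T - t)^4 / 4 := by
  rw [Zf, intervalIntegral.integral_congr (g := fun x => (x - t)^(2+1))
    (fun x _ => by rw [pleg_zero_eq_one, tleg_zero_eq]; ring), int_pow_sub 2]
  norm_num

lemma Gf00_T : Gf t T 0 0 T = (T - t)^2 / 2 := by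
  rw [Gf, intervalIntegral.integral_congr (g := fun x => (x - t)^(0+1))
    (fun x _ => by rw [pleg_zero_eq_one, tleg_zero_eq]; ring), int_pow_sub 0]
  norm_num

lemma Wf0b_T (j : ℕ) : Wf t T 0 (j+1) T
    = ∫ x in t..T, tleg t T (j+1) x * tleg t T (j+1) x := by
  rw [Wf]
  exact intervalIntegral.integral_congr (fun x _ => by rw [pleg_zero_eq_one]; ring)

lemma Zf0b (hT : t < T) (j : ℕ) : Zf t T 0 (j+1)
    = (T - t)/2 * ∫ x in t..T, tleg t T (j+1) x * tleg t T (j+1) x := by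
  have key : ∀ x, pleg t T 0 x * tleg t T (j+1) x * tleg t T (j+1) x * tleg t T 0 x
      = 1 * (tleg t T (j+1) x * tleg t T (j+1) x * (x - t - (T-t)/2))
        + ((T-t)/2) * (tleg t T (j+1) x * tleg t T (j+1) x) := by
    intro x
    rw [pleg_zero_eq_one, tleg_zero_eq]
    ring
  rw [Zf, intervalIntegral.integral_congr (g := fun x =>
      1 * (tleg t T (j+1) x * tleg t T (j+1) x * (x - t - (T-t)/2))
        + ((T-t)/2) * (tleg t T (j+1) x * tleg t T (j+1) x)) (fun x _ => key x),
    integral_comb2 (by fun_prop) (by fun_prop)]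
  have hodd : (∫ x in t..T, tleg t T (j+1) x * tleg t T (j+1) x * (x - t - (T-t)/2)) = 0 := by
    apply reflect_integral_zero t T (by fun_prop)
    intro x
    rw [tleg_reflect_succ]
    have e1 := neg_one_pow_mul_self j
    linear_combination (-(tleg t T (j+1) x * tleg t T (j+1) x * (x - t - (T - t)/2))) * e1
  rw [hodd]
  ring

/-! ### C4 entry values -/

lemma c4_00 (hT : t < T) : C4 t T (legendreSys t T) 0 0 0 0 = (T - t)^2 / 24 := by
  have hL : T - t ≠ 0 := by linarith
  rw [C4_scaling hT, NN_eq hT, Gf00_T, Wf00_T, Zf00, tleg_zero_right]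
  push_cast
  field_simp
  ring

lemma c4_pos_ne (hT : t < T) (i j : ℕ) (h1 : i + 1 ≠ j + 2) (h2 : i + 1 ≠ j) :
    C4 t T (legendreSys t T) (i+1) (j+1) (i+1) (j+1) = 0 := by
  rw [C4_scaling hT, NN_eq hT, tleg_right_succ hT, Zf_zero hT, GfTval hT,
    orth_ne hT h1, orth_ne hT h2]
  ring

lemma c4_adj1 (hT : t < T) (j : ℕ) :
    C4 t T (legendreSys t T) (j+2) (j+1) (j+2) (j+1)
      = (T - t)^2 / (8 * (2*(j:ℝ)+5) * (2*(j:ℝ)+3)) := by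
  have hL : T - t ≠ 0 := by linarith
  have h1 : (j:ℕ) + 2 ≠ j := by omega
  rw [C4_scaling hT, NN_eq hT, tleg_right_succ hT,
    show (j:ℕ)+2 = (j+1)+1 from rfl, Zf_zero hT, GfTval hT,
    orth_ne hT (show (j:ℕ)+1+1 ≠ j by omega), norm_sq hT]
  push_cast
  have h3 : (2*(j:ℝ)+3) ≠ 0 := by positivity
  have h5 : (2*(j:ℝ)+5) ≠ 0 := by positivity
  field_simp
  ring

lemma c4_adj2 (hT : t < T) (i : ℕ) :
    C4 t T (legendreSys t T) (i+1) (i+2) (i+1) (i+2)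
      = (T - t)^2 / (8 * (2*(i:ℝ)+3) * (2*(i:ℝ)+5)) := by
  have hL : T - t ≠ 0 := by linarith
  rw [C4_scaling hT, NN_eq hT, tleg_right_succ hT,
    show (i:ℕ)+2 = (i+1)+1 from rfl, Zf_zero hT, GfTval hT,
    orth_ne hT (show (i:ℕ)+1 ≠ (i+1)+2 by omega), norm_sq hT]
  push_cast
  have h3 : (2*(i:ℝ)+3) ≠ 0 := by positivity
  have h5 : (2*(i:ℝ)+5) ≠ 0 := by positivity
  field_simp
  ring

lemma c4_10 (hT : t < T) : C4 t T (legendreSys t T) 1 0 1 0 = -((T - t)^2) / 120 := by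
  have hL : T - t ≠ 0 := by linarith
  rw [C4_scaling hT, NN_eq hT, tleg_right_succ hT,
    Zf_a0 hT, GfT0val hT, norm_sq hT, orth_ne hT (by omega), Qval hT]
  push_cast
  field_simp
  ring

lemma c4_a0 (hT : t < T) (i : ℕ) :
    C4 t T (legendreSys t T) (i+2) 0 (i+2) 0
      = -((T - t)^2) / (4 * (2*(i:ℝ)+3) * (2*(i:ℝ)+7)) := by
  have hL : T - t ≠ 0 := by linarith
  rw [C4_scaling hT, NN_eq hT, show (i:ℕ)+2 = (i+1)+1 from rfl, tleg_right_succ hT,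
    Zf_a0 hT, GfT0val hT, orth_ne hT (by omega), orth_ne hT (by omega), Qval hT]
  push_cast
  have h3 : (2*(i:ℝ)+3) ≠ 0 := by positivity
  have h5 : (2*(i:ℝ)+5) ≠ 0 := by positivity
  have h7 : (2*(i:ℝ)+7) ≠ 0 := by positivity
  field_simp
  ring

lemma c4_01 (hT : t < T) : C4 t T (legendreSys t T) 0 1 0 1 = -((T - t)^2) / 120 := by
  have hL : T - t ≠ 0 := by linarith
  rw [C4_scaling hT, NN_eq hT, tleg_zero_right,
    Zf0b hT, GfTval hT, Wf0b_T, orth_ne hT (by omega), norm_sq hT, Qval hT]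
  push_cast
  field_simp
  ring

lemma c4_0b (hT : t < T) (j : ℕ) :
    C4 t T (legendreSys t T) 0 (j+2) 0 (j+2)
      = -((T - t)^2) / (4 * (2*(j:ℝ)+3) * (2*(j:ℝ)+7)) := by
  have hL : T - t ≠ 0 := by linarith
  rw [C4_scaling hT, NN_eq hT, show (j:ℕ)+2 = (j+1)+1 from rfl, tleg_zero_right,
    Zf0b hT, GfTval hT, Wf0b_T, orth_ne hT (by omega), orth_ne hT (by omega), Qval hT]
  push_cast
  have h3 : (2*(j:ℝ)+3) ≠ 0 := by positivity
  have h5 : (2*(j:ℝ)+5) ≠ 0 := by positivity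
  have h7 : (2*(j:ℝ)+7) ≠ 0 := by positivity
  field_simp
  ring

/-! ### summation -/

lemma sum_formula (hT : t < T) : ∀ p : ℕ,
    (∑ a ∈ Finset.range (p + 1), ∑ b ∈ Finset.range (p + 1),
      C4 t T (legendreSys t T) a b a b) = (T - t)^2 / (8 * (2*(p:ℝ)+3)) := by
  intro p
  induction p with
  | zero =>
    simp only [zero_add, Finset.sum_range_one]
    rw [c4_00 hT]
    norm_num
  | succ p ih =>
    have hstep : (∑ a ∈ Finset.range (p + 2), ∑ b ∈ Finset.range (p + 2),
          C4 t T (legendreSys t T) a b a b)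
        = (∑ a ∈ Finset.range (p + 1), ∑ b ∈ Finset.range (p + 1),
            C4 t T (legendreSys t T) a b a b)
          + (∑ a ∈ Finset.range (p + 1), C4 t T (legendreSys t T) a (p+1) a (p+1))
          + (∑ b ∈ Finset.range (p + 2), C4 t T (legendreSys t T) (p+1) b (p+1) b) := by
      rw [Finset.sum_range_succ]
      have : ∀ a, (∑ b ∈ Finset.range (p + 2), C4 t T (legendreSys t T) a b a b)
          = (∑ b ∈ Finset.range (p + 1), C4 t T (legendreSys t T) a b a b)
            + C4 t T (legendreSys t T) a (p+1) a (p+1) := fun a => Finset.sum_range_succ _ _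
      rw [Finset.sum_congr rfl (fun a _ => this a), Finset.sum_add_distrib]
    cases p with
    | zero =>
      -- p + 1 = 1 : compute directly
      have h11 : C4 t T (legendreSys t T) 1 1 1 1 = 0 := c4_pos_ne hT 0 0 (by omega) (by omega)
      rw [hstep, ih]
      simp only [Finset.sum_range_succ, Finset.sum_range_zero]
      rw [c4_01 hT, c4_10 hT, h11]
      push_cast
      ring
    | succ r =>
      -- generic step, q = r + 2
      have hA : (∑ a ∈ Finset.range (r + 2), C4 t T (legendreSys t T) a (r+2) a (r+2))
          = C4 t T (legendreSys t T) 0 (r+2) 0 (r+2)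
            + C4 t T (legendreSys t T) (r+1) (r+2) (r+1) (r+2) := by
        have hcongr : ∀ a ∈ Finset.range (r + 2),
            C4 t T (legendreSys t T) a (r+2) a (r+2)
            = (if a = 0 then C4 t T (legendreSys t T) 0 (r+2) 0 (r+2) else 0)
              + (if a = r+1 then C4 t T (legendreSys t T) (r+1) (r+2) (r+1) (r+2) else 0) := by
          intro a ha
          rw [Finset.mem_range] at ha
          cases a with
          | zero => rw [if_pos rfl, if_neg (by omega), add_zero]
          | succ i =>
            by_cases hir : i = r
            · subst hir; rw [if_neg (by omega), if_pos rfl, zero_add]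
            · rw [if_neg (by omega), if_neg (by omega), show (r:ℕ)+2 = (r+1)+1 from rfl,
                c4_pos_ne hT i (r+1) (by omega) (by omega)]
              norm_num
        rw [Finset.sum_congr rfl hcongr, Finset.sum_add_distrib,
          Finset.sum_ite_eq' (Finset.range (r+2)) 0,
          Finset.sum_ite_eq' (Finset.range (r+2)) (r+1),
          if_pos (Finset.mem_range.mpr (by omega)), if_pos (Finset.mem_range.mpr (by omega))]
      have hB : (∑ b ∈ Finset.range (r + 3), C4 t T (legendreSys t T) (r+2) b (r+2) b)
          = C4 t T (legendreSys t T) (r+2) 0 (r+2) 0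
            + C4 t T (legendreSys t T) (r+2) (r+1) (r+2) (r+1) := by
        have hcongr : ∀ b ∈ Finset.range (r + 3),
            C4 t T (legendreSys t T) (r+2) b (r+2) b
            = (if b = 0 then C4 t T (legendreSys t T) (r+2) 0 (r+2) 0 else 0)
              + (if b = r+1 then C4 t T (legendreSys t T) (r+2) (r+1) (r+2) (r+1) else 0) := by
          intro b hb
          rw [Finset.mem_range] at hb
          cases b with
          | zero => rw [if_pos rfl, if_neg (by omega), add_zero]
          | succ j =>
            by_cases hjr : j = r
            · subst hjr; rw [if_neg (by omega), if_pos rfl, zero_add]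
            · rw [if_neg (by omega), if_neg (by omega), show (r:ℕ)+2 = (r+1)+1 from rfl,
                c4_pos_ne hT (r+1) j (by omega) (by omega)]
              norm_num
        rw [Finset.sum_congr rfl hcongr, Finset.sum_add_distrib,
          Finset.sum_ite_eq' (Finset.range (r+3)) 0,
          Finset.sum_ite_eq' (Finset.range (r+3)) (r+1),
          if_pos (Finset.mem_range.mpr (by omega)), if_pos (Finset.mem_range.mpr (by omega))]
      rw [show (r:ℕ)+1+1 = r+2 from rfl] at hstep ih ⊢
      rw [hstep, ih, hA, hB, c4_0b hT, c4_adj2 hT, c4_a0 hT, c4_adj1 hT]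
      have h3 : (2*(r:ℝ)+3) ≠ 0 := by positivity
      have h5 : (2*(r:ℝ)+5) ≠ 0 := by positivity
      have h7 : (2*(r:ℝ)+7) ≠ 0 := by positivity
      push_cast
      field_simp
      ring

theorem stmt13 (t T : ℝ) (hT : t < T) :
    Tendsto (fun p : ℕ => ∑ a ∈ Finset.range (p + 1), ∑ b ∈ Finset.range (p + 1),
      C4 t T (legendreSys t T) a b a b)
      atTop (nhds (0)) := by
  have heq : (fun p : ℕ => ∑ a ∈ Finset.range (p + 1), ∑ b ∈ Finset.range (p + 1),
      C4 t T (legendreSys t T) a b a b)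
      = fun p : ℕ => (T - t)^2 / 8 * (1 / (2*(p:ℝ)+3)) := by
    funext p
    rw [sum_formula hT p, div_mul_div_comm, mul_one]
  rw [heq]
  have h1 : Tendsto (fun p : ℕ => (2*(p:ℝ)+3)) atTop atTop := by
    apply Filter.tendsto_atTop_add_const_right
    exact (tendsto_natCast_atTop_atTop).const_mul_atTop (by norm_num)
  have h2 : Tendsto (fun p : ℕ => 1 / (2*(p:ℝ)+3)) atTop (nhds 0) := by
    simpa using (show Tendsto (fun p : ℕ => (2*(p:ℝ)+3)⁻¹) atTop (nhds 0) from h1.inv_tendsto_atTop)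
  have := h2.const_mul ((T - t)^2 / 8)
  simpa using this
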